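/- arXiv:1107.5232 — 2 statements merged into one kernel-verified Lean document; each statement's English description precedes it below -/
import Mathlib

section
/- Let W = (V, E) be a finite connected graph and let G be a group generated by elements {x_v : v ∈ V} subject to, for each v, the relation ∏_{(v,w) ∈ E, with multiplicity} x_w⁻¹ x_v = 1 (product over edges incident to v in some fixed order), together with x_r = 1 for a fixed root r ∈ V. If G admits a left-invariant strict total order and for a vertex v maximizing x_v there is an adjacent vertex w with x_w ≠ x_v in G, then we obtain a contradiction; hence all generators x_v are equal in G and thus G is trivial. -/
theorem stmt_9 {V : Type*} [Fintype V] [DecidableEq V]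
    (W : SimpleGraph V) [DecidableRel W.Adj] (hconn : W.Connected)
    {G : Type*} [Group G] [LinearOrder G]
    (hmul : ∀ a b c : G, a < b → c * a < c * b)
    (x : V → G) (r : V)
    (hgen : Subgroup.closure (Set.range x) = ⊤)
    (hroot : x r = 1)
    (l : V → List V)
    (hedges : ∀ v, (↑(l v) : Multiset V) = (W.neighborFinset v).val)
    (hrel : ∀ v, ((l v).map (fun w => (x w)⁻¹ * x v)).prod = 1) :
    (∀ v w : V, x v = x w) ∧ ∀ g : G, g = 1 := by
  have hle : ∀ a b c : G, a ≤ b → c * a ≤ c * b := by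
    intro a b c h
    rcases eq_or_lt_of_le h with rfl | h
    · exact le_refl _
    · exact (hmul _ _ _ h).le
  have key : ∀ L : List G, (∀ g ∈ L, 1 ≤ g) →
      1 ≤ L.prod ∧ (L.prod = 1 → ∀ g ∈ L, g = 1) := by
    intro L
    induction L with
    | nil => simp
    | cons a L ih =>
      intro h
      have ha : 1 ≤ a := h a (by simp)
      have hL := ih (fun g hg => h g (by simp [hg]))
      have h1 : a ≤ a * L.prod := by
        calc a = a * 1 := (mul_one a).symm
          _ ≤ a * L.prod := hle _ _ _ hL.1
      constructor
      · calc (1:G) ≤ a := ha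
          _ ≤ a * L.prod := h1
          _ = (a :: L).prod := by simp
      · intro hp g hg
        have hp' : a * L.prod = 1 := by simpa using hp
        have h2 : a ≤ 1 := hp' ▸ h1
        have ha1 : a = 1 := le_antisymm h2 ha
        have hLp : L.prod = 1 := by simpa [ha1] using hp'
        rcases List.mem_cons.1 hg with rfl | hg
        · exact ha1
        · exact hL.2 hLp g hg
  have : Nonempty V := hconn.nonempty
  obtain ⟨v0, -, hmax⟩ := Finset.exists_max_image Finset.univ x Finset.univ_nonempty
  set M := x v0 with hM
  have hmax' : ∀ a, x a ≤ M := fun a => hmax a (Finset.mem_univ a)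
  have step : ∀ u w, x u = M → W.Adj u w → x w = M := by
    intro u w hu hadj
    have hpos : ∀ g ∈ (l u).map (fun w => (x w)⁻¹ * x u), 1 ≤ g := by
      intro g hg
      obtain ⟨w', -, rfl⟩ := List.mem_map.1 hg
      have : x w' ≤ x u := hu ▸ hmax' w'
      calc (1:G) = (x w')⁻¹ * x w' := (inv_mul_cancel _).symm
        _ ≤ (x w')⁻¹ * x u := hle _ _ _ this
    have hw : w ∈ l u := by
      have : w ∈ (↑(l u) : Multiset V) := by
        rw [hedges u]
        exact (SimpleGraph.mem_neighborFinset W u w).2 hadj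
      simpa using this
    have := (key _ hpos).2 (hrel u) ((x w)⁻¹ * x u)
      (List.mem_map.2 ⟨w, hw, rfl⟩)
    have : x w = x u := by
      have h' := this
      rw [inv_mul_eq_one] at h'
      exact h'
    rw [this, hu]
  have hall : ∀ {u v : V} (_ : W.Walk u v), x u = M → x v = M := by
    intro u v p
    induction p with
    | nil => exact id
    | cons h _ ih => exact fun hu => ih (step _ _ hu h)
  have hMall : ∀ v, x v = M := fun v => hall (hconn v0 v).some rfl
  have hM1 : M = 1 := (hMall r).symm.trans hroot
  have hx1 : ∀ v, x v = 1 := fun v => (hMall v).trans hM1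
  refine ⟨fun v w => (hx1 v).trans (hx1 w).symm, ?_⟩
  have hsub : Set.range x ⊆ ((⊥ : Subgroup G) : Set G) := by
    rintro g ⟨v, rfl⟩
    simp [hx1 v]
  have htop : (⊤ : Subgroup G) ≤ ⊥ := hgen ▸ (Subgroup.closure_le _).2 hsub
  intro g
  exact (Subgroup.mem_bot).1 (htop (Subgroup.mem_top g))
end

section
/- Let G be a group with a left-invariant strict total order, let S be a nonempty finite set of elements of G, and let m ∈ S be a maximal element of S with respect to <. If g₁, …, g_k ∈ S and g_j < m for some j, then the product (g₁⁻¹ m)(g₂⁻¹ m)⋯(g_k⁻¹ m) is strictly greater than 1, and in particular is not equal to 1. -/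
theorem stmt_10 {G : Type*} [Group G] [LinearOrder G]
    (hmul : ∀ a b c : G, a < b → c * a < c * b)
    (S : Finset G) (hS : S.Nonempty) (m : G) (hm : m ∈ S)
    (hmax : ∀ g ∈ S, g ≤ m)
    (l : List G) (hl : ∀ g ∈ l, g ∈ S) (hj : ∃ g ∈ l, g < m) :
    1 < (l.map (fun g => g⁻¹ * m)).prod ∧ (l.map (fun g => g⁻¹ * m)).prod ≠ 1 := by
  have hfac : ∀ g : G, g ≤ m → 1 ≤ g⁻¹ * m := by
    intro g hg
    rcases hg.lt_or_eq with h | h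
    · have := hmul g m g⁻¹ h
      simpa using this.le
    · simp [h]
  have hfacs : ∀ g : G, g < m → 1 < g⁻¹ * m := by
    intro g hg
    have := hmul g m g⁻¹ hg
    simpa using this
  have key : ∀ L : List G, (∀ g ∈ L, g ≤ m) →
      (1 ≤ (L.map (fun g => g⁻¹ * m)).prod ∧
        ((∃ g ∈ L, g < m) → 1 < (L.map (fun g => g⁻¹ * m)).prod)) := by
    intro L
    induction L with
    | nil => simp
    | cons a t ih =>
      intro hle
      have ha : a ≤ m := hle a (by simp)
      have ht := ih (fun g hg => hle g (by simp [hg]))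
      have h1 : 1 ≤ a⁻¹ * m := hfac a ha
      constructor
      · simp only [List.map_cons, List.prod_cons]
        calc (1:G) ≤ a⁻¹ * m := h1
          _ = (a⁻¹ * m) * 1 := by rw [mul_one]
          _ ≤ (a⁻¹ * m) * (t.map (fun g => g⁻¹ * m)).prod := by
            rcases ht.1.lt_or_eq with h | h
            · exact (hmul _ _ _ h).le
            · rw [← h]
      · rintro ⟨g, hg, hgm⟩
        simp only [List.map_cons, List.prod_cons]
        rcases List.mem_cons.mp hg with rfl | hg'
        · calc (1:G) < g⁻¹ * m := hfacs g hgm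
            _ = (g⁻¹ * m) * 1 := by rw [mul_one]
            _ ≤ (g⁻¹ * m) * (t.map (fun g => g⁻¹ * m)).prod := by
              rcases ht.1.lt_or_eq with h | h
              · exact (hmul _ _ _ h).le
              · rw [← h]
        · have h2 : 1 < (t.map (fun g => g⁻¹ * m)).prod := ht.2 ⟨g, hg', hgm⟩
          calc (1:G) ≤ a⁻¹ * m := h1
            _ = (a⁻¹ * m) * 1 := by rw [mul_one]
            _ < (a⁻¹ * m) * (t.map (fun g => g⁻¹ * m)).prod := hmul _ _ _ h2
  have h := (key l (fun g hg => hmax g (hl g hg))).2 hj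
  exact ⟨h, h.ne'⟩
end
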